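/- As formal power series in t over ℂ (or any field of characteristic zero containing q), ∏_{k≥0} (1 − q t^{2^k})^{-1} = ∏_{k≥0} ∏_{j=0}^{k} (1 + q^{2^j} t^{2^k}). -/

import Mathlib

open PowerSeries

/-- The formal power series `∏_{k ≥ 0} (1 - q t^(2^k))⁻¹`, defined coefficientwise via
stabilizing partial products. -/
noncomputable def binaryProd {K : Type*} [Field K] (q : K) : PowerSeries K :=
  PowerSeries.mk fun m =>
    PowerSeries.coeff m
      (∏ k ∈ Finset.range (m + 1), (1 - PowerSeries.C q * PowerSeries.X ^ (2 ^ k))⁻¹)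

/-- The formal power series `∏_{k ≥ 0} ∏_{j = 0}^{k} (1 + q^(2^j) t^(2^k))`, defined
coefficientwise via stabilizing partial products. -/
noncomputable def binaryDistinctProd {K : Type*} [Field K] (q : K) : PowerSeries K :=
  PowerSeries.mk fun m =>
    PowerSeries.coeff m
      (∏ k ∈ Finset.range (m + 1), ∏ j ∈ Finset.range (k + 1),
        (1 + PowerSeries.C (q ^ (2 ^ j)) * PowerSeries.X ^ (2 ^ k)))

namespace BinaryProdAux

variable {K : Type*} [Field K]

/-- Finite telescoping identity. -/
lemma key (q : K) (N : ℕ) :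
    (∏ k ∈ Finset.range (N + 1), (1 - PowerSeries.C q * PowerSeries.X ^ (2 ^ k))) *
      (∏ k ∈ Finset.range (N + 1), ∏ j ∈ Finset.range (k + 1),
        (1 + PowerSeries.C (q ^ (2 ^ j)) * PowerSeries.X ^ (2 ^ k))) =
    ∏ j ∈ Finset.range (N + 1),
      (1 - PowerSeries.C (q ^ (2 ^ (j + 1))) * PowerSeries.X ^ (2 ^ (N + 1))) := by
  induction N with
  | zero =>
      simp only [zero_add, Finset.prod_range_one]
      simp only [pow_zero, pow_one, map_pow]
      ring
  | succ N ih =>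
      rw [Finset.prod_range_succ
          (f := fun k => 1 - PowerSeries.C q * PowerSeries.X ^ (2 ^ k)),
        Finset.prod_range_succ
          (f := fun k => ∏ j ∈ Finset.range (k + 1),
            (1 + PowerSeries.C (q ^ (2 ^ j)) * PowerSeries.X ^ (2 ^ k)))]
      have rearrange :
          ∀ A a B b : PowerSeries K, (A * a) * (B * b) = (A * B) * (a * b) := by
        intro A a B b; ring
      rw [rearrange, ih]
      -- absorb the `1 - C q * X ^ 2^(N+1)` factor into the first product
      have habs :
          (∏ j ∈ Finset.range (N + 1),
              (1 - PowerSeries.C (q ^ (2 ^ (j + 1))) * PowerSeries.X ^ (2 ^ (N + 1)))) *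
            ((1 - PowerSeries.C q * PowerSeries.X ^ (2 ^ (N + 1))) *
              ∏ j ∈ Finset.range (N + 1 + 1),
                (1 + PowerSeries.C (q ^ (2 ^ j)) * PowerSeries.X ^ (2 ^ (N + 1)))) =
          (∏ j ∈ Finset.range (N + 2),
              (1 - PowerSeries.C (q ^ (2 ^ j)) * PowerSeries.X ^ (2 ^ (N + 1)))) *
            ∏ j ∈ Finset.range (N + 2),
                (1 + PowerSeries.C (q ^ (2 ^ j)) * PowerSeries.X ^ (2 ^ (N + 1))) := by
        rw [Finset.prod_range_succ'
          (f := fun j => 1 - PowerSeries.C (q ^ (2 ^ j)) * PowerSeries.X ^ (2 ^ (N + 1)))]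
        simp only [pow_zero, pow_one]
        ring
      rw [habs, ← Finset.prod_mul_distrib]
      refine Finset.prod_congr rfl fun j _ => ?_
      have h1 : (PowerSeries.X : PowerSeries K) ^ (2 ^ (N + 1)) *
          PowerSeries.X ^ (2 ^ (N + 1)) = PowerSeries.X ^ (2 ^ (N + 2)) := by
        rw [← pow_add]
        congr 1
        rw [pow_succ]
        ring
      have h2 : PowerSeries.C (q ^ (2 ^ j)) * PowerSeries.C (q ^ (2 ^ j)) =
          PowerSeries.C (q ^ (2 ^ (j + 1))) := by
        rw [← map_mul, ← pow_add]
        congr 2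
        rw [pow_succ]
        ring
      calc (1 - PowerSeries.C (q ^ (2 ^ j)) * PowerSeries.X ^ (2 ^ (N + 1))) *
            (1 + PowerSeries.C (q ^ (2 ^ j)) * PowerSeries.X ^ (2 ^ (N + 1)))
          = 1 - (PowerSeries.C (q ^ (2 ^ j)) * PowerSeries.C (q ^ (2 ^ j))) *
              ((PowerSeries.X : PowerSeries K) ^ (2 ^ (N + 1)) *
                PowerSeries.X ^ (2 ^ (N + 1))) := by ring
        _ = _ := by rw [h1, h2]

lemma dvd_prod_sub_one {ι : Type*} {n : ℕ} (s : Finset ι) (f : ι → PowerSeries K)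
    (h : ∀ j ∈ s, (PowerSeries.X : PowerSeries K) ^ n ∣ f j - 1) :
    (PowerSeries.X : PowerSeries K) ^ n ∣ (∏ j ∈ s, f j) - 1 := by
  classical
  induction s using Finset.induction with
  | empty => simp
  | @insert a s ha ih =>
      rw [Finset.prod_insert ha]
      have h1 := h a (Finset.mem_insert_self a s)
      have h2 := ih fun j hj => h j (Finset.mem_insert_of_mem hj)
      have key : f a * (∏ j ∈ s, f j) - 1 =
          f a * ((∏ j ∈ s, f j) - 1) + (f a - 1) := by ring
      rw [key]
      exact dvd_add (Dvd.dvd.mul_left h2 _) h1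

end BinaryProdAux

theorem binaryProd_eq_binaryDistinctProd {K : Type*} [Field K] (q : K) :
    binaryProd q = binaryDistinctProd q := by
  ext m
  rw [binaryProd, binaryDistinctProd, PowerSeries.coeff_mk, PowerSeries.coeff_mk]
  set A : PowerSeries K :=
    ∏ k ∈ Finset.range (m + 1), (1 - PowerSeries.C q * PowerSeries.X ^ (2 ^ k)) with hA
  set P : PowerSeries K :=
    ∏ k ∈ Finset.range (m + 1), ∏ j ∈ Finset.range (k + 1),
      (1 + PowerSeries.C (q ^ (2 ^ j)) * PowerSeries.X ^ (2 ^ k)) with hP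
  set G : PowerSeries K :=
    ∏ j ∈ Finset.range (m + 1),
      (1 - PowerSeries.C (q ^ (2 ^ (j + 1))) * PowerSeries.X ^ (2 ^ (m + 1))) with hG
  have hkey : A * P = G := BinaryProdAux.key q m
  have hcc : ∀ (c : K) (n : ℕ), 0 < n →
      PowerSeries.constantCoeff (1 - PowerSeries.C c * PowerSeries.X ^ n) = 1 := by
    intro c n hn
    simp [PowerSeries.constantCoeff_X, zero_pow hn.ne']
  have hccA : PowerSeries.constantCoeff A ≠ 0 := by
    rw [hA, map_prod]
    rw [Finset.prod_congr rfl fun k _ => hcc q (2 ^ k) (pow_pos two_pos k)]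
    simp
  have hccG : PowerSeries.constantCoeff G ≠ 0 := by
    rw [hG, map_prod]
    rw [Finset.prod_congr rfl fun j _ => hcc _ (2 ^ (m + 1)) (pow_pos two_pos (m + 1))]
    simp
  -- each factor of A is invertible, product of inverses times A is 1
  have hAinv : (∏ k ∈ Finset.range (m + 1),
      (1 - PowerSeries.C q * PowerSeries.X ^ (2 ^ k))⁻¹) * A = 1 := by
    rw [hA, ← Finset.prod_mul_distrib]
    rw [Finset.prod_congr rfl fun k _ =>
      PowerSeries.inv_mul_cancel _ (by rw [hcc q (2 ^ k) (pow_pos two_pos k)]; exact one_ne_zero)]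
    simp
  have hGinv : G⁻¹ * G = 1 := PowerSeries.inv_mul_cancel _ hccG
  have hAne : A ≠ 0 := fun h => hccA (by rw [h, map_zero])
  have heq : (∏ k ∈ Finset.range (m + 1),
      (1 - PowerSeries.C q * PowerSeries.X ^ (2 ^ k))⁻¹) = P * G⁻¹ := by
    apply mul_right_cancel₀ hAne
    rw [hAinv]
    symm
    calc P * G⁻¹ * A = G⁻¹ * (A * P) := by ring
      _ = 1 := by rw [hkey, hGinv]
  rw [heq]
  -- now compare coefficients: G⁻¹ ≡ 1 mod X^(2^(m+1))
  have hdvdG : (PowerSeries.X : PowerSeries K) ^ (2 ^ (m + 1)) ∣ G - 1 := by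
    rw [hG]
    apply BinaryProdAux.dvd_prod_sub_one
    intro j _
    have : (1 : PowerSeries K) - PowerSeries.C (q ^ (2 ^ (j + 1))) *
        PowerSeries.X ^ (2 ^ (m + 1)) - 1 =
        (-PowerSeries.C (q ^ (2 ^ (j + 1)))) * PowerSeries.X ^ (2 ^ (m + 1)) := by ring
    rw [this]
    exact Dvd.dvd.mul_left dvd_rfl _
  have hdvdGinv : (PowerSeries.X : PowerSeries K) ^ (2 ^ (m + 1)) ∣ G⁻¹ - 1 := by
    have h : G⁻¹ - 1 = (-G⁻¹) * (G - 1) := by linear_combination hGinv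
    rw [h]
    exact Dvd.dvd.mul_left hdvdG _
  have hdvdPG : (PowerSeries.X : PowerSeries K) ^ (2 ^ (m + 1)) ∣ P * G⁻¹ - P := by
    have h : P * G⁻¹ - P = P * (G⁻¹ - 1) := by ring
    rw [h]
    exact Dvd.dvd.mul_left hdvdGinv _
  have hm : m < 2 ^ (m + 1) :=
    lt_of_lt_of_le (Nat.lt_two_pow_self (n := m)) (Nat.pow_le_pow_right (by norm_num) (Nat.le_succ m))
  have hc0 : PowerSeries.coeff m (P * G⁻¹ - P) = 0 :=
    PowerSeries.X_pow_dvd_iff.mp hdvdPG m hm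
  rw [map_sub] at hc0
  exact sub_eq_zero.mp hc0
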